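/- Let X, Y, X', Y' be random variables on a probability space with values in measurable spaces, and suppose P(Y_t ≠ Y'_t) is summable over t ≥ n. Let V_t = (Y_t, W_t) and V'_t = (Y'_t, W_t) for some common process (W_t). Then for σ-algebras F = σ(V_t : t ≤ 0) and G = σ(V_t : t ≥ n), G' = σ(V'_t : t ≥ n), the strong mixing coefficient satisfies α(F, G) ≤ α(F, G') + 2 ∑_{t≥n} P(Y_t ≠ Y'_t), where α(F, G) = sup{ |P(A∩B) - P(A)P(B)| : A ∈ F, B ∈ G }. -/
import Mathlib

open MeasureTheory

/-- The strong mixing coefficient `α(F, G)` between two σ-algebras. -/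
noncomputable def alphaMix {Ω : Type*} [MeasurableSpace Ω] (P : Measure Ω)
    (F G : MeasurableSpace Ω) : ℝ :=
  sSup {x : ℝ | ∃ A B : Set Ω, MeasurableSet[F] A ∧ MeasurableSet[G] B ∧
    x = |(P (A ∩ B)).toReal - (P A).toReal * (P B).toReal|}

section Core

variable {Ω : Type*}

/-- Instance-free version of the mixing set. -/
def alphaSet (μ : Set Ω → ENNReal) (𝒜 ℬ : Set (Set Ω)) : Set ℝ :=
  {x : ℝ | ∃ A B : Set Ω, A ∈ 𝒜 ∧ B ∈ ℬ ∧
    x = |(μ (A ∩ B)).toReal - (μ A).toReal * (μ B).toReal|}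

lemma alphaSet_bddAbove (μ : Set Ω → ENNReal) (hμ1 : ∀ s, (μ s).toReal ≤ 1)
    (𝒜 ℬ : Set (Set Ω)) : BddAbove (alphaSet μ 𝒜 ℬ) := by
  refine ⟨1, ?_⟩
  rintro x ⟨A, B, hA, hB, rfl⟩
  have h1 := hμ1 (A ∩ B)
  have h2 := hμ1 A
  have h3 := hμ1 B
  have n1 : (0:ℝ) ≤ (μ (A ∩ B)).toReal := ENNReal.toReal_nonneg
  have n2 : (0:ℝ) ≤ (μ A).toReal := ENNReal.toReal_nonneg
  have n3 : (0:ℝ) ≤ (μ B).toReal := ENNReal.toReal_nonneg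
  rw [abs_sub_le_iff]
  constructor
  · nlinarith
  · nlinarith

/-- The abstract, instance-free coupling inequality. -/
lemma core_coupling (μ : Set Ω → ENNReal)
    (hμ1 : ∀ s, (μ s).toReal ≤ 1)
    (hfin : ∀ s, μ s ≠ ⊤)
    (hmono : ∀ s t : Set Ω, s ⊆ t → μ s ≤ μ t)
    (hsub : ∀ s t : Set Ω, μ (s ∪ t) ≤ μ s + μ t)
    (𝒜 ℬ ℬ' : Set (Set Ω)) (hAe : ∅ ∈ 𝒜) (hBe : ∅ ∈ ℬ')
    (N : Set Ω) (ε : ℝ) (hε : (μ N).toReal ≤ ε)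
    (happrox : ∀ B ∈ ℬ, ∃ B' ∈ ℬ', B \ N = B' \ N) :
    sSup (alphaSet μ 𝒜 ℬ) ≤ sSup (alphaSet μ 𝒜 ℬ') + 2 * ε := by
  have hε0 : 0 ≤ ε := le_trans ENNReal.toReal_nonneg hε
  -- the RHS sup is nonneg
  have hnn : 0 ≤ sSup (alphaSet μ 𝒜 ℬ') := by
    have hmem : |(μ (∅ ∩ ∅ : Set Ω)).toReal - (μ ∅).toReal * (μ ∅).toReal|
        ∈ alphaSet μ 𝒜 ℬ' := ⟨∅, ∅, hAe, hBe, rfl⟩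
    exact le_trans (abs_nonneg _) (le_csSup (alphaSet_bddAbove μ hμ1 𝒜 ℬ') hmem)
  -- key difference bound
  have key : ∀ U V : Set Ω, U ⊆ V ∪ N → (μ U).toReal ≤ (μ V).toReal + (μ N).toReal := by
    intro U V hUV
    have h1 : μ U ≤ μ V + μ N := le_trans (hmono _ _ hUV) (hsub _ _)
    have h2 := ENNReal.toReal_mono (ENNReal.add_ne_top.mpr ⟨hfin _, hfin _⟩) h1
    rwa [ENNReal.toReal_add (hfin _) (hfin _)] at h2
  have dkey : ∀ U V : Set Ω, U ⊆ V ∪ N → V ⊆ U ∪ N →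
      |(μ U).toReal - (μ V).toReal| ≤ (μ N).toReal := by
    intro U V h1 h2
    rw [abs_sub_le_iff]
    exact ⟨by linarith [key U V h1], by linarith [key V U h2]⟩
  refine Real.sSup_le ?_ (by linarith)
  rintro x ⟨A, B, hA, hB, rfl⟩
  obtain ⟨B', hB', hBB'⟩ := happrox B hB
  have htrans : ∀ ω, ω ∉ N → (ω ∈ B ↔ ω ∈ B') := by
    intro ω h
    have h2 := Set.ext_iff.mp hBB' ω
    simp only [Set.mem_diff, h, not_false_iff, and_true] at h2
    exact h2
  have hsub1 : B ⊆ B' ∪ N := by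
    intro ω hω
    by_cases hNm : ω ∈ N
    · exact Or.inr hNm
    · exact Or.inl ((htrans ω hNm).mp hω)
  have hsub2 : B' ⊆ B ∪ N := by
    intro ω hω
    by_cases hNm : ω ∈ N
    · exact Or.inr hNm
    · exact Or.inl ((htrans ω hNm).mpr hω)
  have hAB1 : A ∩ B ⊆ (A ∩ B') ∪ N := by
    rintro ω ⟨h1, h2⟩
    rcases hsub1 h2 with h | h
    · exact Or.inl ⟨h1, h⟩
    · exact Or.inr h
  have hAB2 : A ∩ B' ⊆ (A ∩ B) ∪ N := by
    rintro ω ⟨h1, h2⟩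
    rcases hsub2 h2 with h | h
    · exact Or.inl ⟨h1, h⟩
    · exact Or.inr h
  have d1 : |(μ (A ∩ B)).toReal - (μ (A ∩ B')).toReal| ≤ (μ N).toReal :=
    dkey _ _ hAB1 hAB2
  have d2 : |(μ B).toReal - (μ B').toReal| ≤ (μ N).toReal :=
    dkey _ _ hsub1 hsub2
  have hmem : |(μ (A ∩ B')).toReal - (μ A).toReal * (μ B').toReal|
      ≤ sSup (alphaSet μ 𝒜 ℬ') :=
    le_csSup (alphaSet_bddAbove μ hμ1 𝒜 ℬ') ⟨A, B', hA, hB', rfl⟩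
  have hA1 := hμ1 A
  have hA0 : (0:ℝ) ≤ (μ A).toReal := ENNReal.toReal_nonneg
  have habs1 := abs_le.mp d1
  have habs3 := abs_le.mp hmem
  have hmul : |(μ A).toReal * (μ B).toReal - (μ A).toReal * (μ B').toReal| ≤ (μ N).toReal := by
    rw [← mul_sub, abs_mul, abs_of_nonneg hA0]
    calc (μ A).toReal * |(μ B).toReal - (μ B').toReal|
        ≤ 1 * (μ N).toReal := mul_le_mul hA1 d2 (abs_nonneg _) zero_le_one
      _ = (μ N).toReal := one_mul _
  have habs4 := abs_le.mp hmul
  rw [abs_le]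
  constructor
  · nlinarith
  · nlinarith

end Core

/-- The approximation step: every set measurable for `σ(V_t : t ≥ n)` agrees off `N`
with a set measurable for `σ(V'_t : t ≥ n)`. -/
lemma approx_lemma {Ω γ δ : Type*} [MeasurableSpace γ] [MeasurableSpace δ]
    (Y Y' : ℤ → Ω → γ) (W : ℤ → Ω → δ) (n : ℤ) (N : Set Ω)
    (hagree : ∀ (t : ℤ), n ≤ t → ∀ ω, ω ∉ N → Y t ω = Y' t ω)
    (B : Set Ω)
    (hB : MeasurableSet[⨆ t : {t : ℤ // n ≤ t},
        MeasurableSpace.comap (fun ω => (Y (t : ℤ) ω, W (t : ℤ) ω)) inferInstance] B) :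
    ∃ B' : Set Ω, MeasurableSet[⨆ t : {t : ℤ // n ≤ t},
        MeasurableSpace.comap (fun ω => (Y' (t : ℤ) ω, W (t : ℤ) ω)) inferInstance] B' ∧
      B \ N = B' \ N := by
  letI mG' : MeasurableSpace Ω := ⨆ t : {t : ℤ // n ≤ t},
      MeasurableSpace.comap (fun ω => (Y' (t : ℤ) ω, W (t : ℤ) ω)) inferInstance
  let M : MeasurableSpace Ω :=
    { MeasurableSet' := fun B => ∃ B', MeasurableSet[mG'] B' ∧ B \ N = B' \ N
      measurableSet_empty := ⟨∅, MeasurableSet.empty, rfl⟩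
      measurableSet_compl := by
        rintro B ⟨B', hB', hBB'⟩
        refine ⟨B'ᶜ, hB'.compl, ?_⟩
        ext ω
        simp only [Set.mem_diff, Set.mem_compl_iff]
        constructor
        · rintro ⟨h1, h2⟩
          refine ⟨fun h => h1 ?_, h2⟩
          exact (hBB'.symm ▸ (⟨h, h2⟩ : ω ∈ B' \ N) : ω ∈ B \ N).1
        · rintro ⟨h1, h2⟩
          refine ⟨fun h => h1 ?_, h2⟩
          exact (hBB' ▸ (⟨h, h2⟩ : ω ∈ B \ N) : ω ∈ B' \ N).1
      measurableSet_iUnion := by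
        intro f hf
        choose g hg1 hg2 using hf
        refine ⟨⋃ i, g i, MeasurableSet.iUnion hg1, ?_⟩
        rw [Set.iUnion_diff, Set.iUnion_diff]
        exact Set.iUnion_congr hg2 }
  have hle : (⨆ t : {t : ℤ // n ≤ t},
      MeasurableSpace.comap (fun ω => (Y (t : ℤ) ω, W (t : ℤ) ω)) inferInstance) ≤ M := by
    refine iSup_le ?_
    rintro ⟨t, ht⟩ S hS
    obtain ⟨S₀, hS₀, rfl⟩ := hS
    refine ⟨(fun ω => (Y' t ω, W t ω)) ⁻¹' S₀, ?_, ?_⟩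
    · exact le_iSup (fun t : {t : ℤ // n ≤ t} =>
        MeasurableSpace.comap (fun ω => (Y' (t : ℤ) ω, W (t : ℤ) ω)) inferInstance) ⟨t, ht⟩
        _ ⟨S₀, hS₀, rfl⟩
    · ext ω
      simp only [Set.mem_diff, Set.mem_preimage]
      constructor
      · rintro ⟨h1, h2⟩
        exact ⟨by rw [← hagree t ht ω h2]; exact h1, h2⟩
      · rintro ⟨h1, h2⟩
        exact ⟨by rw [hagree t ht ω h2]; exact h1, h2⟩
  exact hle B hB

theorem stmt19 {Ω γ δ : Type*} [MeasurableSpace Ω] [MeasurableSpace γ] [MeasurableSpace δ]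
    (P : Measure Ω) [IsProbabilityMeasure P]
    (Y Y' : ℤ → Ω → γ) (W : ℤ → Ω → δ) (n : ℤ)
    (hsum : Summable fun t : ℕ => (P {ω | Y (n + t) ω ≠ Y' (n + t) ω}).toReal) :
    alphaMix P
        (⨆ t : {t : ℤ // t ≤ 0},
          MeasurableSpace.comap (fun ω => (Y (t : ℤ) ω, W (t : ℤ) ω)) inferInstance)
        (⨆ t : {t : ℤ // n ≤ t},
          MeasurableSpace.comap (fun ω => (Y (t : ℤ) ω, W (t : ℤ) ω)) inferInstance) ≤
      alphaMix P
        (⨆ t : {t : ℤ // t ≤ 0},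
          MeasurableSpace.comap (fun ω => (Y (t : ℤ) ω, W (t : ℤ) ω)) inferInstance)
        (⨆ t : {t : ℤ // n ≤ t},
          MeasurableSpace.comap (fun ω => (Y' (t : ℤ) ω, W (t : ℤ) ω)) inferInstance) +
      2 * ∑' t : ℕ, (P {ω | Y (n + t) ω ≠ Y' (n + t) ω}).toReal := by
  classical
  set D : ℕ → Set Ω := fun k => {ω | Y (n + k) ω ≠ Y' (n + k) ω} with hD
  set N : Set Ω := ⋃ k : ℕ, D k with hN
  have hagree : ∀ (t : ℤ), n ≤ t → ∀ ω, ω ∉ N → Y t ω = Y' t ω := by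
    intro t ht ω hω
    have hk : n + ((t - n).toNat : ℤ) = t := by
      rw [Int.toNat_of_nonneg (by linarith)]; ring
    by_contra hne
    exact hω (Set.mem_iUnion.mpr ⟨(t - n).toNat, by
      simp only [hD, Set.mem_setOf_eq, hk]; exact hne⟩)
  have hμ1 : ∀ s : Set Ω, (P s).toReal ≤ 1 := by
    intro s
    have h := ENNReal.toReal_mono (measure_ne_top P Set.univ)
      (measure_mono (Set.subset_univ s))
    simpa [measure_univ] using h
  have hPN : (P N).toReal ≤ ∑' t : ℕ, (P {ω | Y (n + t) ω ≠ Y' (n + t) ω}).toReal := by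
    have h1 : P N ≤ ∑' k, P (D k) := measure_iUnion_le D
    have h2 : (∑' k, P (D k)) = ENNReal.ofReal (∑' k, (P (D k)).toReal) := by
      rw [ENNReal.ofReal_tsum_of_nonneg (fun k => ENNReal.toReal_nonneg) hsum]
      congr 1
      ext k
      rw [ENNReal.ofReal_toReal (measure_ne_top _ _)]
    refine ENNReal.toReal_le_of_le_ofReal
      (tsum_nonneg fun k => ENNReal.toReal_nonneg) ?_
    rw [← h2]; exact h1
  have key := core_coupling (fun s => P s) hμ1 (fun s => measure_ne_top P s)
    (fun s t h => measure_mono h) (fun s t => measure_union_le s t)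
    {A | MeasurableSet[⨆ t : {t : ℤ // t ≤ 0},
      MeasurableSpace.comap (fun ω => (Y (t : ℤ) ω, W (t : ℤ) ω)) inferInstance] A}
    {B | MeasurableSet[⨆ t : {t : ℤ // n ≤ t},
      MeasurableSpace.comap (fun ω => (Y (t : ℤ) ω, W (t : ℤ) ω)) inferInstance] B}
    {B | MeasurableSet[⨆ t : {t : ℤ // n ≤ t},
      MeasurableSpace.comap (fun ω => (Y' (t : ℤ) ω, W (t : ℤ) ω)) inferInstance] B}
    (by simp only [Set.mem_setOf_eq]; exact MeasurableSpace.measurableSet_empty _)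
    (by simp only [Set.mem_setOf_eq]; exact MeasurableSpace.measurableSet_empty _)
    N _ hPN
    (fun B hB => by
      obtain ⟨B', h1, h2⟩ := approx_lemma Y Y' W n N hagree B hB
      exact ⟨B', h1, h2⟩)
  exact key
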